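/- arXiv:1701.04916 — 3 statements merged into one kernel-verified Lean document; each statement's English description precedes it below -/
import Mathlib

section
/- The linear substitution ∂_x(s,T) is well defined: its value does not depend on the chosen enumeration of the occurrences of x in s. That is, if deg_x(s) = n and ŝ, ŝ' are two renamings of s obtained by assigning the fresh variables x₁,…,xₙ to the n occurrences of x in two different orders, then Σ_{f ∈ Sym(n)} ŝ[t_{f(1)}/x₁,…,t_{f(n)}/xₙ] = Σ_{f ∈ Sym(n)} ŝ'[t_{f(1)}/x₁,…,t_{f(n)}/xₙ] for every multiset t₁⋯tₙ of simple terms. -/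
set_option maxHeartbeats 1000000

noncomputable section
open scoped Classical

/-- Simple terms of the resource λ-calculus.  The argument of an application is a
finite multiset of simple terms (a simple poly-term), represented as a `List`
(read up to permutation).  The syntax is enriched with the constant `c0`. -/
inductive RTerm : Type
  | var : ℕ → RTerm
  | lam : ℕ → RTerm → RTerm
  | app : RTerm → List RTerm → RTerm
  | c0  : RTerm

/-- `deg x s` is the number of (free) occurrences of the variable `x` in `s`. -/
def RTerm.deg (x : ℕ) : RTerm → ℕ
  | .var y => if y = x then 1 else 0
  | .lam y t => if y = x then 0 else t.deg x
  | .app t T => t.deg x + (T.attach.map (fun u => u.1.deg x)).sum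
  | .c0 => 0
decreasing_by all_goals (try simp_wf) <;> first
  | (have := List.sizeOf_lt_of_mem u.2; omega)
  | omega

/-- Simultaneous substitution of (optional) terms for variables. -/
def RTerm.msubst (σ : ℕ → Option RTerm) : RTerm → RTerm
  | .var y => (σ y).getD (.var y)
  | .lam y t => .lam y (t.msubst (fun z => if z = y then none else σ z))
  | .app t T => .app (t.msubst σ) (T.attach.map (fun u => u.1.msubst σ))
  | .c0 => .c0
decreasing_by all_goals (try simp_wf) <;> first
  | (have := List.sizeOf_lt_of_mem u.2; omega)
  | omega

/-- `subst x u t` is `t[u/x]`. -/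
def RTerm.subst (x : ℕ) (u : RTerm) (t : RTerm) : RTerm :=
  t.msubst (fun y => if y = x then some u else none)

/-- Size of a simple term. -/
def RTerm.size : RTerm → ℕ
  | .var _ => 1
  | .lam _ t => t.size + 1
  | .app t T => t.size + (T.attach.map (fun u => u.1.size)).sum + 1
  | .c0 => 1
decreasing_by all_goals (try simp_wf) <;> first
  | (have := List.sizeOf_lt_of_mem u.2; omega)
  | omega

end
noncomputable section
open scoped Classical

/-- Simultaneous substitution of the terms `us i` for the variables `xs i`. -/
def msubstFin {n : ℕ} (xs : Fin n → ℕ) (us : Fin n → RTerm) (t : RTerm) : RTerm :=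
  t.msubst fun y => if h : ∃ i, xs i = y then some (us h.choose) else none

end

namespace RTerm

@[simp] theorem deg_var (x y : ℕ) : (var y).deg x = if y = x then 1 else 0 := by rw [deg]
@[simp] theorem deg_lam (x y : ℕ) (t : RTerm) : (lam y t).deg x = if y = x then 0 else t.deg x := by rw [deg]
@[simp] theorem deg_app (x : ℕ) (t : RTerm) (T : List RTerm) :
    (app t T).deg x = t.deg x + (T.map (deg x)).sum := by
  rw [deg]; congr 1; rw [List.attach_map_val]
@[simp] theorem deg_c0 (x : ℕ) : c0.deg x = 0 := by rw [deg]

@[simp] theorem msubst_var (σ : ℕ → Option RTerm) (y : ℕ) :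
    (var y).msubst σ = (σ y).getD (var y) := by rw [msubst]
@[simp] theorem msubst_lam (σ : ℕ → Option RTerm) (y : ℕ) (t : RTerm) :
    (lam y t).msubst σ = lam y (t.msubst (fun z => if z = y then none else σ z)) := by rw [msubst]
@[simp] theorem msubst_app (σ : ℕ → Option RTerm) (t : RTerm) (T : List RTerm) :
    (app t T).msubst σ = app (t.msubst σ) (T.map (msubst σ)) := by
  rw [msubst]; congr 1; rw [List.attach_map_val]
@[simp] theorem msubst_c0 (σ : ℕ → Option RTerm) : c0.msubst σ = c0 := by rw [msubst]

@[simp] theorem size_var (y : ℕ) : (var y).size = 1 := by rw [size]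
@[simp] theorem size_lam (y : ℕ) (t : RTerm) : (lam y t).size = t.size + 1 := by rw [size]
@[simp] theorem size_app (t : RTerm) (T : List RTerm) :
    (app t T).size = t.size + (T.map size).sum + 1 := by
  rw [size]; congr 2; rw [List.attach_map_val]
@[simp] theorem size_c0 : c0.size = 1 := by rw [size]

end RTerm
namespace RTerm

/-- Strong induction on size. -/
theorem strongInd (P : RTerm → Prop) (hv : ∀ y, P (var y))
    (hl : ∀ y t, P t → P (lam y t))
    (ha : ∀ t T, P t → (∀ u ∈ T, P u) → P (app t T))
    (h0 : P c0) : ∀ t, P t := by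
  have key : ∀ N t, t.size ≤ N → P t := by
    intro N
    induction N with
    | zero => intro t ht; cases t <;> simp at ht
    | succ N ih =>
      intro t ht
      cases t with
      | var y => exact hv y
      | c0 => exact h0
      | lam y u => exact hl y u (ih u (by simp at ht; omega))
      | app u T =>
        refine ha u T (ih u ?_) (fun v hv' => ih v ?_)
        · simp at ht; omega
        · have h1 : v.size ≤ (T.map size).sum :=
            List.single_le_sum (fun b _ => Nat.zero_le b) _ (List.mem_map_of_mem hv')
          simp at ht; omega
  exact fun t => key t.size t le_rfl

theorem msubst_congr : ∀ (t : RTerm) {σ σ' : ℕ → Option RTerm},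
    (∀ y, t.deg y ≠ 0 → σ y = σ' y) → t.msubst σ = t.msubst σ' := by
  intro t
  induction t using strongInd with
  | hv y => intro σ σ' h; simp only [msubst_var]; rw [h y (by simp)]
  | h0 => intro σ σ' h; simp
  | hl y t ih =>
    intro σ σ' h
    simp only [msubst_lam]
    congr 1
    refine ih (fun z hz => ?_)
    by_cases hzy : z = y
    · simp [hzy]
    · simp only [if_neg hzy]
      exact h z (by simpa [Ne.symm hzy] using hz)
  | ha t T iht ihT =>
    intro σ σ' h
    simp only [msubst_app]
    have hd : ∀ y, t.deg y ≠ 0 → σ y = σ' y := by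
      intro y hy; refine h y ?_; simp; omega
    congr 1
    · exact iht hd
    · refine List.map_congr_left (fun u hu => ihT u hu (fun y hy => h y ?_))
      simp only [deg_app]
      intro hc
      have : u.deg y ≤ (T.map (deg y)).sum :=
        List.single_le_sum (fun b _ => Nat.zero_le b) _ (List.mem_map_of_mem hu)
      omega

theorem msubst_id : ∀ (t : RTerm) {σ : ℕ → Option RTerm},
    (∀ y, σ y = none) → t.msubst σ = t := by
  intro t
  induction t using strongInd with
  | hv y => intro σ h; simp [h]
  | h0 => intro σ h; simp
  | hl y t ih =>
    intro σ h
    simp only [msubst_lam]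
    congr 1
    exact ih (fun z => by by_cases hz : z = y <;> simp [hz, h])
  | ha t T iht ihT =>
    intro σ h
    simp only [msubst_app]
    rw [iht h, List.map_congr_left (fun u hu => ihT u hu h)]
    simp

end RTerm
namespace RTerm

/-- The collapsing substitution: every variable of `A` is replaced by `var x`. -/
def colF (A : Finset ℕ) (x : ℕ) : ℕ → Option RTerm :=
  fun y => if y ∈ A then some (var x) else none

theorem colF_lam (A : Finset ℕ) (x y : ℕ) (t : RTerm) :
    (lam y t).msubst (colF A x) = lam y (t.msubst (colF (A.erase y) x)) := by
  simp only [msubst_lam]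
  have he : (fun z => if z = y then none else colF A x z) = colF (A.erase y) x := by
    funext z
    by_cases hz : z = y
    · simp [hz, colF]
    · simp [colF, hz, Finset.mem_erase]
  rw [he]

theorem sum_listSum (A : Finset ℕ) (T : List RTerm) (f : ℕ → RTerm → ℕ) :
    ∑ a ∈ A, (T.map (f a)).sum = (T.map (fun u => ∑ a ∈ A, f a u)).sum := by
  induction T with
  | nil => simp
  | cons u T ih => simp [Finset.sum_add_distrib, ih]

theorem listsum_add (T : List RTerm) (f g : RTerm → ℕ) :
    (T.map (fun u => f u + g u)).sum = (T.map f).sum + (T.map g).sum := by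
  induction T with
  | nil => simp
  | cons u T ih => simp [ih]; omega

theorem sum_erase_deg (A : Finset ℕ) (y : ℕ) (t : RTerm) :
    ∑ a ∈ A, (if y = a then 0 else t.deg a) = ∑ a ∈ A.erase y, t.deg a := by
  by_cases hy : y ∈ A
  · rw [← Finset.add_sum_erase A _ hy, if_pos rfl, zero_add]
    refine Finset.sum_congr rfl (fun a ha => ?_)
    rw [if_neg (fun h => (Finset.mem_erase.1 ha).1 h.symm)]
  · rw [Finset.erase_eq_of_notMem hy]
    refine Finset.sum_congr rfl (fun a ha => ?_)
    rw [if_neg (fun h => hy (by rw [h]; exact ha))]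

theorem col_deg_le : ∀ (t : RTerm) (A : Finset ℕ) (x : ℕ), x ∉ A →
    (t.msubst (colF A x)).deg x ≤ t.deg x + ∑ a ∈ A, t.deg a := by
  intro t
  induction t using strongInd with
  | hv y =>
    intro A x hx
    by_cases hy : y ∈ A
    · have : ∑ a ∈ A, (var y).deg a = 1 := by
        simp only [deg_var]
        rw [Finset.sum_ite_eq A y (fun _ => 1), if_pos hy]
      simp only [msubst_var, colF, if_pos hy, Option.getD_some, this]
      simp
    · simp [colF, hy]
  | h0 => intro A x hx; simp
  | hl y t ih =>
    intro A x hx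
    rw [colF_lam]
    simp only [deg_lam]
    by_cases hyx : y = x
    · simp [hyx]
    · rw [if_neg hyx, if_neg hyx]
      calc (t.msubst (colF (A.erase y) x)).deg x
          ≤ t.deg x + ∑ a ∈ A.erase y, t.deg a :=
            ih (A.erase y) x (fun h => hx (Finset.mem_of_mem_erase h))
        _ = t.deg x + ∑ a ∈ A, (if y = a then 0 else t.deg a) := by
            rw [sum_erase_deg]
  | ha t T iht ihT =>
    intro A x hx
    simp only [msubst_app, deg_app, List.map_map, Function.comp_def]
    have hswap : ∑ a ∈ A, (T.map (deg a)).sum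
        = (T.map (fun u => ∑ a ∈ A, u.deg a)).sum := sum_listSum A T (fun a u => u.deg a)
    have hsum : Finset.sum A (fun a => t.deg a + (T.map (deg a)).sum)
        = (∑ a ∈ A, t.deg a) + ∑ a ∈ A, (T.map (deg a)).sum :=
      Finset.sum_add_distrib
    have h1 := iht A x hx
    have h2 : (T.map (fun u => deg x (msubst (colF A x) u))).sum
        ≤ (T.map (fun u => u.deg x + ∑ a ∈ A, u.deg a)).sum :=
      List.sum_le_sum (fun u hu => ihT u hu A x hx)
    have h3 : (T.map (fun u => u.deg x + ∑ a ∈ A, u.deg a)).sum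
        = (T.map (deg x)).sum + (T.map (fun u => ∑ a ∈ A, u.deg a)).sum :=
      listsum_add T _ _
    omega

end RTerm
namespace RTerm

theorem list_eq_of_sum_map {l : List RTerm} {f g : RTerm → ℕ}
    (h : ∀ a ∈ l, f a ≤ g a) (hs : (l.map f).sum = (l.map g).sum) :
    ∀ a ∈ l, f a = g a := by
  induction l with
  | nil => simp
  | cons a l ih =>
    simp only [List.map_cons, List.sum_cons] at hs
    have h1 : f a ≤ g a := h a (by simp)
    have h2 : (l.map f).sum ≤ (l.map g).sum :=
      List.sum_le_sum (fun u hu => h u (by simp [hu]))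
    intro b hb
    rcases List.mem_cons.1 hb with rfl | hb
    · omega
    · exact ih (fun u hu => h u (by simp [hu])) (by omega) b hb

theorem bijOn_combine {A1 A2 B1 B2 : Finset ℕ} {π1 π2 : ℕ → ℕ}
    (h1 : Set.BijOn π1 ↑B1 ↑A1) (h2 : Set.BijOn π2 ↑B2 ↑A2)
    (hdA : Disjoint A1 A2) (hdB : Disjoint B1 B2) :
    Set.BijOn (fun y => if y ∈ B1 then π1 y else π2 y) ↑(B1 ∪ B2) ↑(A1 ∪ A2) := by
  have hA := Finset.disjoint_left.1 hdA
  have hB := Finset.disjoint_left.1 hdB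
  refine ⟨?_, ?_, ?_⟩
  · intro y hy
    simp only [Finset.coe_union, Set.mem_union, Finset.mem_coe] at hy ⊢
    by_cases h : y ∈ B1
    · simp only [if_pos h]; exact Or.inl (h1.mapsTo h)
    · simp only [if_neg h]; exact Or.inr (h2.mapsTo (hy.resolve_left h))
  · intro y hy z hz he
    simp only [Finset.coe_union, Set.mem_union, Finset.mem_coe] at hy hz
    simp only [] at he
    by_cases h : y ∈ B1 <;> by_cases h' : z ∈ B1
    · exact h1.injOn h h' (by simpa [h, h'] using he)
    · exfalso
      simp only [if_pos h, if_neg h'] at he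
      have m1 : π1 y ∈ (A1 : Set ℕ) := h1.mapsTo h
      have m2 : π2 z ∈ (A2 : Set ℕ) := h2.mapsTo (hz.resolve_left h')
      exact hA (Finset.mem_coe.1 m1) (Finset.mem_coe.1 (he ▸ m2))
    · exfalso
      simp only [if_neg h, if_pos h'] at he
      have m1 : π1 z ∈ (A1 : Set ℕ) := h1.mapsTo h'
      have m2 : π2 y ∈ (A2 : Set ℕ) := h2.mapsTo (hy.resolve_left h)
      exact hA (Finset.mem_coe.1 m1) (Finset.mem_coe.1 (he.symm ▸ m2))
    · exact h2.injOn (hy.resolve_left h) (hz.resolve_left h')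
        (by simpa [h, h'] using he)
  · intro b hb
    simp only [Finset.coe_union, Set.mem_union, Finset.mem_coe] at hb
    rcases hb with hb | hb
    · obtain ⟨y, hy, hyb⟩ := h1.surjOn hb
      exact ⟨y, by simp [Finset.mem_coe.1 hy], by simp [Finset.mem_coe.1 hy, hyb]⟩
    · obtain ⟨y, hy, hyb⟩ := h2.surjOn hb
      have hyB1 : y ∉ B1 := fun h => hB h (Finset.mem_coe.1 hy)
      exact ⟨y, by simp [Finset.mem_coe.1 hy], by simp [hyB1, hyb]⟩

/-- Restricting the collapse to the variables actually occurring. -/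
theorem restrict (u : RTerm) (A : Finset ℕ) (x : ℕ) (hx : x ∉ A)
    (hone : ∀ a ∈ A, u.deg a ≤ 1) (hdx : u.deg x = 0)
    (htight : (u.msubst (colF A x)).deg x = u.deg x + ∑ a ∈ A, u.deg a) :
    x ∉ A.filter (fun a => u.deg a ≠ 0) ∧
    (∀ a ∈ A.filter (fun a => u.deg a ≠ 0), u.deg a = 1) ∧
    u.msubst (colF A x) = u.msubst (colF (A.filter (fun a => u.deg a ≠ 0)) x) ∧
    (u.msubst (colF (A.filter (fun a => u.deg a ≠ 0)) x)).deg x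
      = (A.filter (fun a => u.deg a ≠ 0)).card := by
  set B := A.filter (fun a => u.deg a ≠ 0) with hB
  have hxB : x ∉ B := fun h => hx (Finset.mem_of_mem_filter _ h)
  have honeB : ∀ a ∈ B, u.deg a = 1 := by
    intro a ha
    have h1 := hone a (Finset.mem_of_mem_filter _ ha)
    have h2 := (Finset.mem_filter.1 ha).2
    omega
  have hcc : u.msubst (colF A x) = u.msubst (colF B x) := by
    refine msubst_congr u (fun y hy => ?_)
    unfold colF
    by_cases hyA : y ∈ A
    · rw [if_pos hyA, if_pos (Finset.mem_filter.2 ⟨hyA, hy⟩)]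
    · rw [if_neg hyA, if_neg (fun h => hyA (Finset.mem_of_mem_filter _ h))]
  have hsum : ∑ a ∈ A, u.deg a = ∑ a ∈ B, u.deg a := by
    rw [hB, Finset.sum_filter_ne_zero]
  refine ⟨hxB, honeB, hcc, ?_⟩
  rw [← hcc, htight, hdx, zero_add, hsum]
  rw [Finset.sum_congr rfl honeB]
  simp

end RTerm
namespace RTerm

theorem col_deg_le_list (T : List RTerm) (A : Finset ℕ) (x : ℕ) (hx : x ∉ A) :
    ((T.map (msubst (colF A x))).map (deg x)).sum
      ≤ (T.map (deg x)).sum + ∑ a ∈ A, (T.map (deg a)).sum := by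
  have hswap : ∑ a ∈ A, (T.map (deg a)).sum
      = (T.map (fun u => ∑ a ∈ A, u.deg a)).sum := sum_listSum A T (fun a u => u.deg a)
  have h2 : ((T.map (msubst (colF A x))).map (deg x)).sum
      ≤ (T.map (fun u => u.deg x + ∑ a ∈ A, u.deg a)).sum := by
    rw [List.map_map]
    exact List.sum_le_sum (fun u hu => col_deg_le u A x hx)
  have h3 := listsum_add T (deg x) (fun u => ∑ a ∈ A, u.deg a)
  omega

theorem restrictL (T : List RTerm) (A : Finset ℕ) (x : ℕ) (hx : x ∉ A)
    (hone : ∀ a ∈ A, (T.map (deg a)).sum ≤ 1) (hdx : (T.map (deg x)).sum = 0)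
    (htight : ((T.map (msubst (colF A x))).map (deg x)).sum
      = (T.map (deg x)).sum + ∑ a ∈ A, (T.map (deg a)).sum) :
    x ∉ A.filter (fun a => (T.map (deg a)).sum ≠ 0) ∧
    (∀ a ∈ A.filter (fun a => (T.map (deg a)).sum ≠ 0), (T.map (deg a)).sum = 1) ∧
    T.map (msubst (colF A x)) = T.map (msubst (colF (A.filter (fun a => (T.map (deg a)).sum ≠ 0)) x)) ∧
    ((T.map (msubst (colF (A.filter (fun a => (T.map (deg a)).sum ≠ 0)) x))).map (deg x)).sum
      = (A.filter (fun a => (T.map (deg a)).sum ≠ 0)).card := by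
  set B := A.filter (fun a => (T.map (deg a)).sum ≠ 0) with hB
  have hxB : x ∉ B := fun h => hx (Finset.mem_of_mem_filter _ h)
  have honeB : ∀ a ∈ B, (T.map (deg a)).sum = 1 := by
    intro a ha
    have h1 := hone a (Finset.mem_of_mem_filter _ ha)
    have h2 := (Finset.mem_filter.1 ha).2
    omega
  have hcc : T.map (msubst (colF A x)) = T.map (msubst (colF B x)) := by
    refine List.map_congr_left (fun u hu => msubst_congr u (fun y hy => ?_))
    have hys : (T.map (deg y)).sum ≠ 0 := by
      have : u.deg y ≤ (T.map (deg y)).sum :=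
        List.single_le_sum (fun b _ => Nat.zero_le b) _ (List.mem_map_of_mem hu)
      omega
    unfold colF
    by_cases hyA : y ∈ A
    · rw [if_pos hyA, if_pos (Finset.mem_filter.2 ⟨hyA, hys⟩)]
    · rw [if_neg hyA, if_neg (fun h => hyA (Finset.mem_of_mem_filter _ h))]
  have hsum : ∑ a ∈ A, (T.map (deg a)).sum = ∑ a ∈ B, (T.map (deg a)).sum := by
    rw [hB, Finset.sum_filter_ne_zero]
  refine ⟨hxB, honeB, hcc, ?_⟩
  rw [← hcc, htight, hdx, zero_add, hsum, Finset.sum_congr rfl honeB]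
  simp

def MainP (sh : RTerm) : Prop :=
  ∀ (sh' : RTerm) (A A' : Finset ℕ) (x : ℕ),
    x ∉ A → x ∉ A' →
    (∀ a ∈ A, sh.deg a = 1) → (∀ a ∈ A', sh'.deg a = 1) →
    sh.deg x = 0 → sh'.deg x = 0 →
    (sh.msubst (colF A x)).deg x = A.card →
    (sh'.msubst (colF A' x)).deg x = A'.card →
    sh.msubst (colF A x) = sh'.msubst (colF A' x) →
    ∃ π : ℕ → ℕ, Set.BijOn π ↑A' ↑A ∧ ∀ us : ℕ → RTerm,
      sh'.msubst (fun y => if y ∈ A' then some (us (π y)) else none)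
      = sh.msubst (fun y => if y ∈ A then some (us y) else none)

end RTerm
namespace RTerm

theorem main_list : ∀ (T : List RTerm), (∀ u ∈ T, MainP u) →
    ∀ (T' : List RTerm) (A A' : Finset ℕ) (x : ℕ),
    x ∉ A → x ∉ A' →
    (∀ a ∈ A, (T.map (deg a)).sum = 1) → (∀ a ∈ A', (T'.map (deg a)).sum = 1) →
    (T.map (deg x)).sum = 0 → (T'.map (deg x)).sum = 0 →
    ((T.map (msubst (colF A x))).map (deg x)).sum = A.card →
    ((T'.map (msubst (colF A' x))).map (deg x)).sum = A'.card →
    T.map (msubst (colF A x)) = T'.map (msubst (colF A' x)) →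
    ∃ π : ℕ → ℕ, Set.BijOn π ↑A' ↑A ∧ ∀ us : ℕ → RTerm,
      T'.map (msubst (fun y => if y ∈ A' then some (us (π y)) else none))
      = T.map (msubst (fun y => if y ∈ A then some (us y) else none)) := by
  intro T
  induction T with
  | nil =>
    intro _ T' A A' x hxA hxA' honeA honeA' _ _ _ _ hcoleq
    have hT' : T' = [] := by
      cases T' with
      | nil => rfl
      | cons a b => exact absurd hcoleq (by simp)
    subst hT'
    have hA : A = ∅ := Finset.eq_empty_of_forall_notMem
      (fun a ha => by have := honeA a ha; simp at this)
    have hA' : A' = ∅ := Finset.eq_empty_of_forall_notMem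
      (fun a ha => by have := honeA' a ha; simp at this)
    subst hA; subst hA'
    exact ⟨id, by simpa using Set.bijOn_empty id, fun us => by simp⟩
  | cons u T ih =>
    intro hT T' A A' x hxA hxA' honeA honeA' hdx hdx' hcard hcard' hcoleq
    obtain ⟨u', T2', rfl⟩ : ∃ a b, T' = a :: b := by
      cases T' with
      | nil => exact absurd hcoleq (by simp)
      | cons a b => exact ⟨a, b, rfl⟩
    simp only [List.map_cons, List.sum_cons, List.cons.injEq] at hcoleq hdx hdx' hcard hcard'
    obtain ⟨hchead, hctail⟩ := hcoleq
    have hdxu : u.deg x = 0 := by omega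
    have hdxT : (T.map (deg x)).sum = 0 := by omega
    have hdxu' : u'.deg x = 0 := by omega
    have hdxT' : (T2'.map (deg x)).sum = 0 := by omega
    have honeuT : ∀ a ∈ A, u.deg a + (T.map (deg a)).sum = 1 := by
      intro a ha; have := honeA a ha; simpa using this
    have honeuT' : ∀ a ∈ A', u'.deg a + (T2'.map (deg a)).sum = 1 := by
      intro a ha; have := honeA' a ha; simpa using this
    have honeu : ∀ a ∈ A, u.deg a ≤ 1 := fun a ha => by have := honeuT a ha; omega
    have honeTl : ∀ a ∈ A, (T.map (deg a)).sum ≤ 1 := fun a ha => by have := honeuT a ha; omega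
    have honeu' : ∀ a ∈ A', u'.deg a ≤ 1 := fun a ha => by have := honeuT' a ha; omega
    have honeTl' : ∀ a ∈ A', (T2'.map (deg a)).sum ≤ 1 := fun a ha => by have := honeuT' a ha; omega
    -- total tightness and its split
    have hA1 : ∑ a ∈ A, (u.deg a + (T.map (deg a)).sum) = A.card := by
      rw [Finset.sum_congr rfl honeuT]; simp
    have hA1' : ∑ a ∈ A', (u'.deg a + (T2'.map (deg a)).sum) = A'.card := by
      rw [Finset.sum_congr rfl honeuT']; simp
    have hsplit : ∑ a ∈ A, (u.deg a + (T.map (deg a)).sum)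
        = (∑ a ∈ A, u.deg a) + ∑ a ∈ A, (T.map (deg a)).sum := Finset.sum_add_distrib
    have hsplit' : ∑ a ∈ A', (u'.deg a + (T2'.map (deg a)).sum)
        = (∑ a ∈ A', u'.deg a) + ∑ a ∈ A', (T2'.map (deg a)).sum := Finset.sum_add_distrib
    have hle1 := col_deg_le u A x hxA
    have hle2 := col_deg_le_list T A x hxA
    have hle1' := col_deg_le u' A' x hxA'
    have hle2' := col_deg_le_list T2' A' x hxA'
    have htightu : (u.msubst (colF A x)).deg x = u.deg x + ∑ a ∈ A, u.deg a := by omega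
    have htightT : ((T.map (msubst (colF A x))).map (deg x)).sum
        = (T.map (deg x)).sum + ∑ a ∈ A, (T.map (deg a)).sum := by omega
    have htightu' : (u'.msubst (colF A' x)).deg x = u'.deg x + ∑ a ∈ A', u'.deg a := by omega
    have htightT' : ((T2'.map (msubst (colF A' x))).map (deg x)).sum
        = (T2'.map (deg x)).sum + ∑ a ∈ A', (T2'.map (deg a)).sum := by omega
    -- restrictions
    obtain ⟨hrx1, hrone1, hrcc1, hrcard1⟩ := restrict u A x hxA honeu hdxu htightu
    obtain ⟨hrx1', hrone1', hrcc1', hrcard1'⟩ := restrict u' A' x hxA' honeu' hdxu' htightu'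
    obtain ⟨hrx2, hrone2, hrcc2, hrcard2⟩ := restrictL T A x hxA honeTl hdxT htightT
    obtain ⟨hrx2', hrone2', hrcc2', hrcard2'⟩ := restrictL T2' A' x hxA' honeTl' hdxT' htightT'
    -- decompositions
    have hAunion : A = A.filter (fun a => u.deg a ≠ 0)
        ∪ A.filter (fun a => (T.map (deg a)).sum ≠ 0) := by
      ext a
      simp only [Finset.mem_union, Finset.mem_filter]
      constructor
      · intro ha
        have := honeuT a ha
        by_cases h : u.deg a = 0
        · exact Or.inr ⟨ha, by omega⟩
        · exact Or.inl ⟨ha, h⟩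
      · rintro (⟨ha, _⟩ | ⟨ha, _⟩) <;> exact ha
    have hA'union : A' = A'.filter (fun a => u'.deg a ≠ 0)
        ∪ A'.filter (fun a => (T2'.map (deg a)).sum ≠ 0) := by
      ext a
      simp only [Finset.mem_union, Finset.mem_filter]
      constructor
      · intro ha
        have := honeuT' a ha
        by_cases h : u'.deg a = 0
        · exact Or.inr ⟨ha, by omega⟩
        · exact Or.inl ⟨ha, h⟩
      · rintro (⟨ha, _⟩ | ⟨ha, _⟩) <;> exact ha
    have hdisj : Disjoint (A.filter (fun a => u.deg a ≠ 0))
        (A.filter (fun a => (T.map (deg a)).sum ≠ 0)) := by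
      rw [Finset.disjoint_left]
      intro a h1 h2
      have h1' := Finset.mem_filter.1 h1
      have h2' := Finset.mem_filter.1 h2
      have := honeuT a h1'.1
      omega
    have hdisj' : Disjoint (A'.filter (fun a => u'.deg a ≠ 0))
        (A'.filter (fun a => (T2'.map (deg a)).sum ≠ 0)) := by
      rw [Finset.disjoint_left]
      intro a h1 h2
      have h1' := Finset.mem_filter.1 h1
      have h2' := Finset.mem_filter.1 h2
      have := honeuT' a h1'.1
      omega
    -- recursive calls
    obtain ⟨πh, bijh, subh⟩ := hT u (by simp) u'
      (A.filter (fun a => u.deg a ≠ 0)) (A'.filter (fun a => u'.deg a ≠ 0)) x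
      hrx1 hrx1' hrone1 hrone1' hdxu hdxu' hrcard1 hrcard1'
      (by rw [← hrcc1, ← hrcc1', hchead])
    obtain ⟨πt, bijt, subt⟩ := ih (fun v hv => hT v (by simp [hv])) T2'
      (A.filter (fun a => (T.map (deg a)).sum ≠ 0))
      (A'.filter (fun a => (T2'.map (deg a)).sum ≠ 0)) x
      hrx2 hrx2' hrone2 hrone2' hdxT hdxT' hrcard2 hrcard2'
      (by rw [← hrcc2, ← hrcc2', hctail])
    refine ⟨fun y => if y ∈ A'.filter (fun a => u'.deg a ≠ 0) then πh y else πt y, ?_, ?_⟩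
    · have hb := bijOn_combine bijh bijt hdisj hdisj'
      rwa [← hAunion, ← hA'union] at hb
    · intro us
      simp only [List.map_cons, List.cons.injEq]
      constructor
      · have e1 : u'.msubst (fun y => if y ∈ A' then
              some (us (if y ∈ A'.filter (fun a => u'.deg a ≠ 0) then πh y else πt y)) else none)
            = u'.msubst (fun y => if y ∈ A'.filter (fun a => u'.deg a ≠ 0)
              then some (us (πh y)) else none) := by
          refine msubst_congr u' (fun y hy => ?_)
          by_cases hyA : y ∈ A'
          · have hyB : y ∈ A'.filter (fun a => u'.deg a ≠ 0) := Finset.mem_filter.2 ⟨hyA, hy⟩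
            rw [if_pos hyA, if_pos hyB, if_pos hyB]
          · have hyB : y ∉ A'.filter (fun a => u'.deg a ≠ 0) :=
              fun h => hyA (Finset.mem_of_mem_filter _ h)
            rw [if_neg hyA, if_neg hyB]
        have e2 : u.msubst (fun y => if y ∈ A then some (us y) else none)
            = u.msubst (fun y => if y ∈ A.filter (fun a => u.deg a ≠ 0)
              then some (us y) else none) := by
          refine msubst_congr u (fun y hy => ?_)
          by_cases hyA : y ∈ A
          · rw [if_pos hyA, if_pos (Finset.mem_filter.2 ⟨hyA, hy⟩)]
          · rw [if_neg hyA, if_neg (fun h => hyA (Finset.mem_of_mem_filter _ h))]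
        rw [e1, e2]
        exact subh us
      · have e1 : T2'.map (msubst (fun y => if y ∈ A' then
              some (us (if y ∈ A'.filter (fun a => u'.deg a ≠ 0) then πh y else πt y)) else none))
            = T2'.map (msubst (fun y => if y ∈ A'.filter (fun a => (T2'.map (deg a)).sum ≠ 0)
              then some (us (πt y)) else none)) := by
          refine List.map_congr_left (fun v hv => msubst_congr v (fun y hy => ?_))
          have hys : (T2'.map (deg y)).sum ≠ 0 := by
            have : v.deg y ≤ (T2'.map (deg y)).sum :=
              List.single_le_sum (fun b _ => Nat.zero_le b) _ (List.mem_map_of_mem hv)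
            omega
          by_cases hyA : y ∈ A'
          · have hyB : y ∈ A'.filter (fun a => (T2'.map (deg a)).sum ≠ 0) :=
              Finset.mem_filter.2 ⟨hyA, hys⟩
            have hyBu : y ∉ A'.filter (fun a => u'.deg a ≠ 0) :=
              Finset.disjoint_right.1 hdisj' hyB
            rw [if_pos hyA, if_neg hyBu, if_pos hyB]
          · have hyB : y ∉ A'.filter (fun a => (T2'.map (deg a)).sum ≠ 0) :=
              fun h => hyA (Finset.mem_of_mem_filter _ h)
            rw [if_neg hyA, if_neg hyB]
        have e2 : T.map (msubst (fun y => if y ∈ A then some (us y) else none))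
            = T.map (msubst (fun y => if y ∈ A.filter (fun a => (T.map (deg a)).sum ≠ 0)
              then some (us y) else none)) := by
          refine List.map_congr_left (fun v hv => msubst_congr v (fun y hy => ?_))
          have hys : (T.map (deg y)).sum ≠ 0 := by
            have : v.deg y ≤ (T.map (deg y)).sum :=
              List.single_le_sum (fun b _ => Nat.zero_le b) _ (List.mem_map_of_mem hv)
            omega
          by_cases hyA : y ∈ A
          · rw [if_pos hyA, if_pos (Finset.mem_filter.2 ⟨hyA, hys⟩)]
          · rw [if_neg hyA, if_neg (fun h => hyA (Finset.mem_of_mem_filter _ h))]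
        rw [e1, e2]
        exact subt us

end RTerm
namespace RTerm

theorem main : ∀ sh : RTerm, MainP sh := by
  intro sh
  induction sh using strongInd with
  | hv y =>
    intro sh' A A' x hxA hxA' honeA honeA' hdx hdx' hcard hcard' hcoleq
    by_cases hyA : y ∈ A
    · have hcolv : (var y).msubst (colF A x) = var x := by simp [colF, hyA]
      rw [hcolv] at hcard hcoleq
      have hA1 : A.card = 1 := by simpa using hcard.symm
      obtain ⟨b, hb⟩ := Finset.card_eq_one.1 hA1
      have hyb : y = b := by rw [hb] at hyA; simpa using hyA
      subst hyb
      cases sh' with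
      | lam z t => rw [msubst_lam] at hcoleq; exact absurd hcoleq (by simp)
      | app t T => rw [msubst_app] at hcoleq; exact absurd hcoleq (by simp)
      | c0 => rw [msubst_c0] at hcoleq; exact absurd hcoleq (by simp)
      | var y' =>
        by_cases hyA' : y' ∈ A'
        · have hcolv' : (var y').msubst (colF A' x) = var x := by simp [colF, hyA']
          rw [hcolv'] at hcard'
          have hA1' : A'.card = 1 := by simpa using hcard'.symm
          obtain ⟨b', hb'⟩ := Finset.card_eq_one.1 hA1'
          have hyb' : y' = b' := by rw [hb'] at hyA'; simpa using hyA'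
          subst hyb'
          refine ⟨fun _ => y, ?_, fun us => ?_⟩
          · rw [hb, hb']
            simp only [Finset.coe_singleton, Set.bijOn_singleton]
          · rw [hb, hb']
            simp
        · have hcolv' : (var y').msubst (colF A' x) = var y' := by simp [colF, hyA']
          rw [hcolv'] at hcoleq
          have : y' = x := by
            have := hcoleq
            injection this with h
            exact h.symm
          subst this
          simp at hdx'
    · have hcolv : (var y).msubst (colF A x) = var y := by simp [colF, hyA]
      rw [hcolv] at hcard hcoleq
      have hyx : y ≠ x := by intro h; subst h; simp at hdx
      have hA0 : A = ∅ := Finset.card_eq_zero.1 (by simpa [hyx] using hcard.symm)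
      cases sh' with
      | lam z t => rw [msubst_lam] at hcoleq; exact absurd hcoleq (by simp)
      | app t T => rw [msubst_app] at hcoleq; exact absurd hcoleq (by simp)
      | c0 => rw [msubst_c0] at hcoleq; exact absurd hcoleq (by simp)
      | var y' =>
        by_cases hyA' : y' ∈ A'
        · have hcolv' : (var y').msubst (colF A' x) = var x := by simp [colF, hyA']
          rw [hcolv'] at hcoleq
          injection hcoleq with h
          exact absurd h hyx
        · have hcolv' : (var y').msubst (colF A' x) = var y' := by simp [colF, hyA']
          rw [hcolv'] at hcoleq hcard'
          injection hcoleq with h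
          subst h
          have hA0' : A' = ∅ := Finset.card_eq_zero.1 (by simpa [hyx] using hcard'.symm)
          subst hA0; subst hA0'
          exact ⟨id, by simpa using Set.bijOn_empty id, fun us => by simp⟩
  | h0 =>
    intro sh' A A' x hxA hxA' honeA honeA' hdx hdx' hcard hcard' hcoleq
    rw [msubst_c0] at hcard hcoleq
    have hA0 : A = ∅ := Finset.card_eq_zero.1 (by simpa using hcard.symm)
    cases sh' with
    | lam z t => rw [msubst_lam] at hcoleq; exact absurd hcoleq (by simp)
    | app t T => rw [msubst_app] at hcoleq; exact absurd hcoleq (by simp)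
    | var y' =>
      rw [msubst_var] at hcoleq
      by_cases hyA' : y' ∈ A'
      · rw [show colF A' x y' = some (var x) by simp [colF, hyA']] at hcoleq
        exact absurd hcoleq (by simp)
      · rw [show colF A' x y' = none by simp [colF, hyA']] at hcoleq
        exact absurd hcoleq (by simp)
    | c0 =>
      rw [msubst_c0] at hcard'
      have hA0' : A' = ∅ := Finset.card_eq_zero.1 (by simpa using hcard'.symm)
      subst hA0; subst hA0'
      exact ⟨id, by simpa using Set.bijOn_empty id, fun us => by simp⟩
  | hl y t ihp =>
    intro sh' A A' x hxA hxA' honeA honeA' hdx hdx' hcard hcard' hcoleq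
    have hyA : y ∉ A := fun h => by have := honeA y h; simp at this
    have hcolv : (lam y t).msubst (colF A x) = lam y (t.msubst (colF A x)) := by
      rw [colF_lam, Finset.erase_eq_of_notMem hyA]
    rw [hcolv] at hcard hcoleq
    cases sh' with
    | var y' =>
      rw [msubst_var] at hcoleq
      by_cases hyA' : y' ∈ A'
      · rw [show colF A' x y' = some (var x) by simp [colF, hyA']] at hcoleq
        exact absurd hcoleq (by simp)
      · rw [show colF A' x y' = none by simp [colF, hyA']] at hcoleq
        exact absurd hcoleq (by simp)
    | app t' T' => rw [msubst_app] at hcoleq; exact absurd hcoleq (by simp)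
    | c0 => rw [msubst_c0] at hcoleq; exact absurd hcoleq (by simp)
    | lam y' t' =>
      have hyA' : y' ∉ A' := fun h => by have := honeA' y' h; simp at this
      have hcolv' : (lam y' t').msubst (colF A' x) = lam y' (t'.msubst (colF A' x)) := by
        rw [colF_lam, Finset.erase_eq_of_notMem hyA']
      rw [hcolv'] at hcard' hcoleq
      injection hcoleq with hyy hteq
      subst hyy
      by_cases hyx : y = x
      · subst hyx
        rw [deg_lam, if_pos rfl] at hcard hcard'
        have hA0 : A = ∅ := Finset.card_eq_zero.1 hcard.symm
        have hA0' : A' = ∅ := Finset.card_eq_zero.1 hcard'.symm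
        subst hA0; subst hA0'
        have htt : t = t' := by
          rw [msubst_id t (fun z => by simp [colF]), msubst_id t' (fun z => by simp [colF])] at hteq
          exact hteq
        subst htt
        refine ⟨id, by simpa using Set.bijOn_empty id, fun us => ?_⟩
        rw [msubst_id _ (fun z => by simp), msubst_id _ (fun z => by simp)]
      · rw [deg_lam, if_neg hyx] at hcard hcard'
        have honet : ∀ a ∈ A, t.deg a = 1 := by
          intro a ha
          have h1 := honeA a ha
          rw [deg_lam, if_neg (fun h => hyA (by rw [h]; exact ha))] at h1
          exact h1
        have honet' : ∀ a ∈ A', t'.deg a = 1 := by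
          intro a ha
          have h1 := honeA' a ha
          rw [deg_lam, if_neg (fun h => hyA' (by rw [h]; exact ha))] at h1
          exact h1
        rw [deg_lam, if_neg hyx] at hdx
        rw [deg_lam, if_neg hyx] at hdx'
        obtain ⟨π, bij, sub⟩ := ihp t' A A' x hxA hxA' honet honet' hdx hdx' hcard hcard' hteq
        refine ⟨π, bij, fun us => ?_⟩
        rw [msubst_lam, msubst_lam]
        have r1 : (fun z => if z = y then none
              else if z ∈ A' then some (us (π z)) else none)
            = fun z => if z ∈ A' then some (us (π z)) else none := by
          funext z
          by_cases hz : z = y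
          · subst hz; simp [hyA']
          · simp [hz]
        have r2 : (fun z => if z = y then none
              else if z ∈ A then some (us z) else none)
            = fun z => if z ∈ A then some (us z) else none := by
          funext z
          by_cases hz : z = y
          · subst hz; simp [hyA]
          · simp [hz]
        rw [r1, r2, sub us]
  | ha t T ihp ihT =>
    intro sh' A A' x hxA hxA' honeA honeA' hdx hdx' hcard hcard' hcoleq
    rw [msubst_app] at hcard hcoleq
    cases sh' with
    | var y' =>
      rw [msubst_var] at hcoleq
      by_cases hyA' : y' ∈ A'
      · rw [show colF A' x y' = some (var x) by simp [colF, hyA']] at hcoleq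
        exact absurd hcoleq (by simp)
      · rw [show colF A' x y' = none by simp [colF, hyA']] at hcoleq
        exact absurd hcoleq (by simp)
    | lam y' t' => rw [msubst_lam] at hcoleq; exact absurd hcoleq (by simp)
    | c0 => rw [msubst_c0] at hcoleq; exact absurd hcoleq (by simp)
    | app t' T' =>
      rw [msubst_app] at hcard' hcoleq
      injection hcoleq with hchead hctail
      have hmem : ∀ u ∈ t :: T, MainP u := by
        intro u hu
        rcases List.mem_cons.1 hu with rfl | hu
        · exact ihp
        · exact ihT u hu
      have honeL : ∀ a ∈ A, ((t :: T).map (deg a)).sum = 1 := by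
        intro a ha
        have := honeA a ha
        rw [deg_app] at this
        simpa using this
      have honeL' : ∀ a ∈ A', ((t' :: T').map (deg a)).sum = 1 := by
        intro a ha
        have := honeA' a ha
        rw [deg_app] at this
        simpa using this
      have hdxL : ((t :: T).map (deg x)).sum = 0 := by
        rw [deg_app] at hdx; simpa using hdx
      have hdxL' : ((t' :: T').map (deg x)).sum = 0 := by
        rw [deg_app] at hdx'; simpa using hdx'
      have hcardL : (((t :: T).map (msubst (colF A x))).map (deg x)).sum = A.card := by
        rw [deg_app] at hcard; simpa using hcard
      have hcardL' : (((t' :: T').map (msubst (colF A' x))).map (deg x)).sum = A'.card := by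
        rw [deg_app] at hcard'; simpa using hcard'
      have hcolL : (t :: T).map (msubst (colF A x)) = (t' :: T').map (msubst (colF A' x)) := by
        simp only [List.map_cons, List.cons.injEq]
        exact ⟨hchead, hctail⟩
      obtain ⟨π, bij, sub⟩ := main_list (t :: T) hmem (t' :: T') A A' x
        hxA hxA' honeL honeL' hdxL hdxL' hcardL hcardL' hcolL
      refine ⟨π, bij, fun us => ?_⟩
      have h := sub us
      simp only [List.map_cons, List.cons.injEq] at h
      rw [msubst_app, msubst_app, h.1, h.2]

end RTerm

/-- **The linear substitution `∂_x(s,T)` is well defined**: its value does not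
depend on the chosen enumeration of the occurrences of `x` in `s`.  If
`deg_x(s) = n` and `sh`, `sh'` are two renamings of `s` obtained by assigning the
fresh pairwise distinct variables `x₁,…,xₙ` to the `n` occurrences of `x` in
two different orders, then for every family `t₁,…,tₙ` of simple terms the sums
`Σ_{f ∈ Sym(n)} sh[t_{f(1)}/x₁,…,t_{f(n)}/xₙ]` and
`Σ_{f ∈ Sym(n)} sh'[t_{f(1)}/x₁,…,t_{f(n)}/xₙ]` coincide (as formal
ℕ-linear combinations of simple terms). -/
theorem linear_subst_well_defined (s : RTerm) (x : ℕ) (n : ℕ)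
    (hdeg : s.deg x = n) (xs : Fin n → ℕ)
    (hinj : Function.Injective xs) (hxs : ∀ i, xs i ≠ x)
    (hfresh : ∀ i, s.deg (xs i) = 0)
    (sh sh' : RTerm)
    (hone : ∀ i, sh.deg (xs i) = 1) (hone' : ∀ i, sh'.deg (xs i) = 1)
    (hno : sh.deg x = 0) (hno' : sh'.deg x = 0)
    (hcol : sh.msubst (fun y => if ∃ i, xs i = y then some (.var x) else none) = s)
    (hcol' : sh'.msubst (fun y => if ∃ i, xs i = y then some (.var x) else none) = s)
    (ts : Fin n → RTerm) :
    (∑ f : Equiv.Perm (Fin n),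
        Finsupp.single (msubstFin xs (fun i => ts (f i)) sh) (1 : ℕ)) =
      ∑ f : Equiv.Perm (Fin n),
        Finsupp.single (msubstFin xs (fun i => ts (f i)) sh') (1 : ℕ) := by
  classical
  set A : Finset ℕ := Finset.image xs Finset.univ with hA
  have hmem : ∀ y, y ∈ A ↔ ∃ i, xs i = y := by
    intro y; simp [hA, Finset.mem_image]
  have hfeq : RTerm.colF A x = fun y => if ∃ i, xs i = y then some (.var x) else none := by
    funext y
    unfold RTerm.colF
    by_cases h : ∃ i, xs i = y
    · rw [if_pos ((hmem y).2 h), if_pos h]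
    · rw [if_neg (fun hh => h ((hmem y).1 hh)), if_neg h]
  have hcolA : sh.msubst (RTerm.colF A x) = s := by rw [hfeq]; exact hcol
  have hcolA' : sh'.msubst (RTerm.colF A x) = s := by rw [hfeq]; exact hcol'
  have hcardA : A.card = n := by
    rw [hA, Finset.card_image_of_injective _ hinj, Finset.card_univ, Fintype.card_fin]
  have hxA : x ∉ A := by
    rw [hmem]; rintro ⟨i, hi⟩; exact hxs i hi
  have honeA : ∀ a ∈ A, sh.deg a = 1 := by
    intro a ha; obtain ⟨i, hi⟩ := (hmem a).1 ha; rw [← hi]; exact hone i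
  have honeA' : ∀ a ∈ A, sh'.deg a = 1 := by
    intro a ha; obtain ⟨i, hi⟩ := (hmem a).1 ha; rw [← hi]; exact hone' i
  have hcc : (sh.msubst (RTerm.colF A x)).deg x = A.card := by
    rw [hcolA, hdeg, hcardA]
  have hcc' : (sh'.msubst (RTerm.colF A x)).deg x = A.card := by
    rw [hcolA', hdeg, hcardA]
  obtain ⟨π, bij, sub⟩ := RTerm.main sh sh' A A x hxA hxA honeA honeA' hno hno' hcc hcc'
    (by rw [hcolA, hcolA'])
  -- build the permutation of `Fin n`
  have hxsA : ∀ i, xs i ∈ A := fun i => (hmem _).2 ⟨i, rfl⟩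
  have hπmem : ∀ i : Fin n, ∃ j, xs j = π (xs i) := by
    intro i
    have h1 : π (xs i) ∈ (A : Set ℕ) := bij.mapsTo (by exact_mod_cast hxsA i)
    exact (hmem _).1 (by exact_mod_cast h1)
  let g : Fin n → Fin n := fun i => (hπmem i).choose
  have hg : ∀ i, xs (g i) = π (xs i) := fun i => (hπmem i).choose_spec
  have hginj : Function.Injective g := by
    intro i j hij
    have h1 : π (xs i) = π (xs j) := by rw [← hg, ← hg, hij]
    have h2 : xs i = xs j :=
      bij.injOn (by exact_mod_cast hxsA i) (by exact_mod_cast hxsA j) h1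
    exact hinj h2
  have hgbij : Function.Bijective g := Finite.injective_iff_bijective.1 hginj
  let σ : Equiv.Perm (Fin n) := Equiv.ofBijective g hgbij
  have hσ : ∀ i, σ i = g i := fun _ => rfl
  -- key pointwise identity
  have key : ∀ vs : Fin n → RTerm,
      msubstFin xs (fun j => vs (g j)) sh' = msubstFin xs vs sh := by
    intro vs
    set us : ℕ → RTerm := fun y => if h : ∃ i, xs i = y then vs h.choose else .c0 with hus
    have e2 : (fun y => if y ∈ A then some (us y) else none)
        = (fun y => if h : ∃ i, xs i = y then some (vs h.choose) else none) := by
      funext y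
      by_cases h : ∃ i, xs i = y
      · rw [if_pos ((hmem y).2 h), dif_pos h, hus]
        simp only [dif_pos h]
      · rw [if_neg (fun hh => h ((hmem y).1 hh)), dif_neg h]
    have e1 : (fun y => if y ∈ A then some (us (π y)) else none)
        = (fun y => if h : ∃ i, xs i = y then some ((fun j => vs (g j)) h.choose) else none) := by
      funext y
      by_cases h : ∃ i, xs i = y
      · rw [if_pos ((hmem y).2 h), dif_pos h]
        obtain hc := h.choose_spec
        have hmemπ : ∃ k, xs k = π y := by
          rw [← hc]; exact hπmem h.choose
        have husπ : us (π y) = vs hmemπ.choose := by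
          rw [hus]; simp only [dif_pos hmemπ]
        have hgc : g h.choose = hmemπ.choose := by
          have h1 : xs (g h.choose) = π y := by rw [hg, hc]
          have h2 : xs hmemπ.choose = π y := hmemπ.choose_spec
          exact hinj (h1.trans h2.symm)
        show some (us (π y)) = some (vs (g h.choose))
        rw [husπ, hgc]
      · rw [if_neg (fun hh => h ((hmem y).1 hh)), dif_neg h]
    have hsub := sub us
    rw [e1] at hsub
    rw [e2] at hsub
    exact hsub
  -- conclude by reindexing the sum
  have key2 : ∀ f : Equiv.Perm (Fin n),
      msubstFin xs (fun i => ts ((f * σ) i)) sh' = msubstFin xs (fun i => ts (f i)) sh := by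
    intro f
    have := key (fun i => ts (f i))
    convert this using 2
    rfl
  calc (∑ f : Equiv.Perm (Fin n), Finsupp.single (msubstFin xs (fun i => ts (f i)) sh) (1 : ℕ))
      = ∑ f : Equiv.Perm (Fin n),
          Finsupp.single (msubstFin xs (fun i => ts ((f * σ) i)) sh') (1 : ℕ) := by
        refine Finset.sum_congr rfl (fun f _ => ?_)
        rw [key2 f]
    _ = ∑ f : Equiv.Perm (Fin n),
          Finsupp.single (msubstFin xs (fun i => ts (f i)) sh') (1 : ℕ) := by
        exact Equiv.sum_comp (Equiv.mulRight σ)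
          (fun f => Finsupp.single (msubstFin xs (fun i => ts (f i)) sh') (1 : ℕ))
end

section
/- The inductive Taylor expansion is compatible with the analytic expansion of application: over a commutative semiring S in which every positive integer has a multiplicative inverse, the Taylor expansion M* = Σ_{t∈Δ} (w(t,M)/m(t))·t satisfies, for all algebraic terms P and Q, ((P)Q)* = Σ_{n=0}^{∞} (1/n!) ⟨P*⟩ (Q*)ⁿ; equivalently, for every simple term t and simple poly-term T of cardinality n, the coefficient of ⟨t⟩T in ((P)Q)* equals the coefficient of ⟨t⟩T in (1/n!)⟨P*⟩(Q*)ⁿ, where ⟨P*⟩(Q*)ⁿ is expanded by multilinearity. -/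
set_option maxHeartbeats 1000000

noncomputable section
open scoped Classical

/-- The multiplicity `m(t)` of a simple resource term:
`m(x) = 1`, `m(λx.t) = m(t)`,
`m(⟨t⟩T) = m(t) · ∏_{u ∈ supp T} T(u)! · m(u)^{T(u)}`. -/
def mult : RTerm → ℕ
  | .var _ => 1
  | .lam _ t => mult t
  | .app t T =>
      mult t * (T.attach.map fun u => mult u.1).prod *
        ∏ u ∈ (↑T : Multiset RTerm).toFinset, ((↑T : Multiset RTerm).count u).factorial
  | .c0 => 1
decreasing_by all_goals (try simp_wf) <;> first
  | (have := List.sizeOf_lt_of_mem u.2; omega)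
  | omega

/-- The multiplicity `m(T) = ∏_{u ∈ supp T} T(u)! · m(u)^{T(u)}`
of a simple poly-term `T`. -/
def multPoly (T : List RTerm) : ℕ :=
  (T.map mult).prod *
    ∏ u ∈ (↑T : Multiset RTerm).toFinset, ((↑T : Multiset RTerm).count u).factorial

end
noncomputable section
open scoped Classical

/-- Terms of the algebraic λ-calculus over a semiring `S`
(`M ::= x | λx.M | (M)N | αM | M+N | 0`), enriched with the constant `c₀`. -/
inductive ATerm (S : Type*) : Type _
  | var  : ℕ → ATerm S
  | lam  : ℕ → ATerm S → ATerm S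
  | app  : ATerm S → ATerm S → ATerm S
  | smul : S → ATerm S → ATerm S
  | add  : ATerm S → ATerm S → ATerm S
  | zero : ATerm S
  | c0   : ATerm S

variable {S : Type*}

/-- Free variables of an algebraic term. -/
def ATerm.fv : ATerm S → Set ℕ
  | .var x => {x}
  | .lam x M => M.fv \ {x}
  | .app M N => M.fv ∪ N.fv
  | .smul _ M => M.fv
  | .add M N => M.fv ∪ N.fv
  | .zero => ∅
  | .c0 => ∅

/-- The weight `w(t,M)` of a simple resource term `t` in an algebraic term `M`:
`w(x,x) = 1`, `w(λx.t, λx.M) = w(t,M)`,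
`w(⟨t⟩T, (M)N) = w(t,M) · ∏_{u ∈ supp T} w(u,N)^{T(u)}`,
`w(t, αM) = α·w(t,M)`, `w(t, M+N) = w(t,M) + w(t,N)`, `w(c₀,c₀) = 1`,
and `w(t,M) = 0` in all other cases. -/
def weight [Semiring S] : RTerm → ATerm S → S
  | t, .smul α M => α * weight t M
  | t, .add M N => weight t M + weight t N
  | .var x, .var y => if x = y then 1 else 0
  | .lam x t, .lam y M => if x = y then weight t M else 0
  | .app t T, .app M N => weight t M * (T.attach.map fun u => weight u.1 N).prod
  | .c0, .c0 => 1
  | _, _ => 0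
termination_by t M => sizeOf M
decreasing_by all_goals (try simp_wf) <;> omega

/-- The coefficient `M*_t = w(t,M) / m(t)` of the simple term `t` in the
Taylor expansion `M* = Σ_t (w(t,M)/m(t))·t` of the algebraic term `M`
(meaningful when the positive integers are invertible in `S`). -/
def taylorCoeff [Semiring S] (t : RTerm) (M : ATerm S) : S :=
  Ring.inverse ((mult t : S)) * weight t M

/-- The equivalence `≡_alg` of the algebraic λ-calculus: the congruence
generated by the left `S`-module axioms and the linearity axioms. -/
inductive AlgEq [Semiring S] : ATerm S → ATerm S → Prop
  | refl (M) : AlgEq M M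
  | symm {M N} : AlgEq M N → AlgEq N M
  | trans {M N P} : AlgEq M N → AlgEq N P → AlgEq M P
  -- congruence rules
  | lamCong (x) {M N} : AlgEq M N → AlgEq (.lam x M) (.lam x N)
  | appCong {M M' N N'} : AlgEq M M' → AlgEq N N' → AlgEq (.app M N) (.app M' N')
  | smulCong (α) {M N} : AlgEq M N → AlgEq (.smul α M) (.smul α N)
  | addCong {M M' N N'} : AlgEq M M' → AlgEq N N' → AlgEq (.add M N) (.add M' N')
  -- left S-module axioms
  | addZero (M) : AlgEq (.add M .zero) M
  | addAssoc (M N P) : AlgEq (.add (.add M N) P) (.add M (.add N P))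
  | addComm (M N) : AlgEq (.add M N) (.add N M)
  | smulAdd (α M N) : AlgEq (.smul α (.add M N)) (.add (.smul α M) (.smul α N))
  | addSmul (α β M) : AlgEq (.add (.smul α M) (.smul β M)) (.smul (α + β) M)
  | smulSmul (α β M) : AlgEq (.smul α (.smul β M)) (.smul (α * β) M)
  | oneSmul (M) : AlgEq (.smul 1 M) M
  | zeroSmul (M) : AlgEq (.smul (0 : S) M) .zero
  | smulZero (α) : AlgEq (.smul α .zero) .zero
  -- linearity axioms
  | lamAdd (x M N) : AlgEq (.lam x (.add M N)) (.add (.lam x M) (.lam x N))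
  | lamSmul (x α M) : AlgEq (.lam x (.smul α M)) (.smul α (.lam x M))
  | lamZero (x) : AlgEq (.lam x (.zero : ATerm S)) .zero
  | zeroApp (M) : AlgEq (.app .zero M) .zero
  | smulApp (α M N) : AlgEq (.app (.smul α M) N) (.smul α (.app M N))
  | addApp (M N P) : AlgEq (.app (.add M N) P) (.add (.app M P) (.app N P))

/-- Pure λ-terms: algebraic terms built only from variables, abstraction and
application. -/
inductive ATerm.Pure : ATerm S → Prop
  | var (x) : Pure (.var x)
  | lam (x) {M} : Pure M → Pure (.lam x M)
  | app {M N} : Pure M → Pure N → Pure (.app M N)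

end
open scoped Classical
section TaylorAux
open scoped Classical

lemma taylor_count_prod_erase {α : Type*} [DecidableEq α] (T : List α) (b : α) (hbT : b ∈ T) :
    ∏ u ∈ T.toFinset, (T.count u).factorial
      = T.count b * ∏ u ∈ (T.erase b).toFinset, ((T.erase b).count u).factorial := by
  set E := T.erase b with hE
  have hcE : ∀ u, E.count u = if u = b then T.count b - 1 else T.count u := by
    intro u; rw [hE, List.count_erase]
    rcases eq_or_ne u b with h | h
    · simp [h]
    · simp [h, (Ne.symm h)]
  have hsub : E.toFinset ⊆ T.toFinset := by
    intro u hu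
    exact List.mem_toFinset.2 (List.mem_of_mem_erase (List.mem_toFinset.1 hu))
  have hPE : ∏ u ∈ E.toFinset, (E.count u).factorial
      = ∏ u ∈ T.toFinset, (E.count u).factorial := by
    refine Finset.prod_subset hsub ?_
    intro u _ hu
    have : E.count u = 0 := by
      by_contra h
      exact hu (List.mem_toFinset.2 (List.count_pos_iff.1 (Nat.pos_of_ne_zero h)))
    simp [this]
  rw [hPE]
  have hbF : b ∈ T.toFinset := List.mem_toFinset.2 hbT
  rw [← Finset.prod_erase_mul _ _ hbF, ← Finset.prod_erase_mul _ _ hbF]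
  have hcongr : ∏ u ∈ T.toFinset.erase b, (T.count u).factorial
      = ∏ u ∈ T.toFinset.erase b, (E.count u).factorial := by
    refine Finset.prod_congr rfl fun u hu => ?_
    rw [hcE u, if_neg (Finset.ne_of_mem_erase hu)]
  rw [hcongr]
  have hpos : 0 < T.count b := List.count_pos_iff.2 hbT
  have : (T.count b).factorial = T.count b * (E.count b).factorial := by
    rw [hcE b, if_pos rfl]
    obtain ⟨n, hn⟩ := Nat.exists_eq_succ_of_ne_zero hpos.ne'
    rw [hn]; simp [Nat.factorial_succ]
  rw [this]; ring

lemma taylor_perm_count_key {α : Type*} [DecidableEq α] (T : List α) :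
    T.permutations.toFinset.card * ∏ u ∈ T.toFinset, (T.count u).factorial
      = T.length.factorial := by
  match T with
  | [] => simp [List.permutations]
  | a :: T' =>
    set T := a :: T' with hT
    have hbi : T.permutations.toFinset =
        T.toFinset.biUnion (fun b => ((T.erase b).permutations.toFinset).image (b :: ·)) := by
      ext L
      simp only [List.mem_toFinset, List.mem_permutations, Finset.mem_biUnion,
        Finset.mem_image]
      constructor
      · intro hL
        match L with
        | [] => exact absurd hL.symm (by simp [hT])
        | b :: L' =>
          have hb : b ∈ T ∧ L'.Perm (T.erase b) := (List.cons_perm_iff_perm_erase).1 hL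
          exact ⟨b, hb.1, L', hb.2, rfl⟩
      · rintro ⟨b, hb, L', hL', rfl⟩
        exact (List.cons_perm_iff_perm_erase).2 ⟨hb, hL'⟩
    have hdisj : ∀ b ∈ T.toFinset, ∀ c ∈ T.toFinset, b ≠ c →
        Disjoint (((T.erase b).permutations.toFinset).image (b :: ·))
          (((T.erase c).permutations.toFinset).image (c :: ·)) := by
      intro b _ c _ hbc
      simp only [Finset.disjoint_left, Finset.mem_image]
      rintro L ⟨L1, _, rfl⟩ ⟨L2, _, h⟩
      exact hbc (by injection h.symm)
    have hcard : T.permutations.toFinset.card =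
        ∑ b ∈ T.toFinset, (T.erase b).permutations.toFinset.card := by
      rw [hbi, Finset.card_biUnion hdisj]
      exact Finset.sum_congr rfl fun b _ => Finset.card_image_of_injective _
        (fun x y h => by injection h)
    rw [hcard, Finset.sum_mul]
    have hstep : ∀ b ∈ T.toFinset,
        (T.erase b).permutations.toFinset.card * ∏ u ∈ T.toFinset, (T.count u).factorial
          = T'.length.factorial * T.count b := by
      intro b hb
      have hbT : b ∈ T := List.mem_toFinset.1 hb
      rw [taylor_count_prod_erase T b hbT]
      have hlen : (T.erase b).length = T'.length := by
        rw [List.length_erase_of_mem hbT, hT]; simp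
      have ih := taylor_perm_count_key (T.erase b)
      rw [hlen] at ih
      rw [mul_left_comm, ih, mul_comm]
    rw [Finset.sum_congr rfl hstep, ← Finset.mul_sum, List.sum_toFinset_count_eq_length]
    rw [hT]
    simp [Nat.factorial_succ]
    ring
termination_by T.length
decreasing_by
  rw [List.length_erase_of_mem hbT, hT]; simp

lemma taylor_mult_pos : ∀ t : RTerm, 0 < mult t
  | .var _ => by rw [mult]; norm_num
  | .c0 => by rw [mult]; norm_num
  | .lam _ s => by rw [mult]; exact taylor_mult_pos s
  | .app s T => by
    rw [mult]
    refine Nat.mul_pos (Nat.mul_pos (taylor_mult_pos s) ?_) ?_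
    · refine List.prod_pos fun x hx => ?_
      simp only [List.mem_map] at hx
      obtain ⟨u, hu, rfl⟩ := hx
      exact taylor_mult_pos u.1
    · exact Finset.prod_pos fun u _ => Nat.factorial_pos _
decreasing_by all_goals (try simp_wf) <;> first
  | (have := List.sizeOf_lt_of_mem u.2; omega)
  | omega

lemma taylor_weight_app {S : Type*} [CommSemiring S]
    (t : RTerm) (T : List RTerm) (P Q : ATerm S) :
    weight (.app t T) (.app P Q) = weight t P * (T.map fun u => weight u Q).prod := by
  rw [weight]; congr 1; simp

lemma taylor_mult_app (t : RTerm) (T : List RTerm) :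
    mult (.app t T) = mult t * (T.map mult).prod *
      ∏ u ∈ T.toFinset, (T.count u).factorial := by
  rw [mult]
  congr 1
  · congr 1; simp
  · refine Finset.prod_congr ?_ fun u _ => by rw [Multiset.coe_count]
    ext u; simp

lemma taylor_inverse_list_prod {S : Type*} [CommMonoidWithZero S] (l : List S) :
    Ring.inverse l.prod = (l.map Ring.inverse).prod := by
  induction l with
  | nil => simp
  | cons a l ih => simp [Ring.mul_inverse_rev, ih, mul_comm]

end TaylorAux


/-- **The inductive Taylor expansion is compatible with the analytic expansion
of application**: over a commutative semiring in which every positive integer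
is invertible, for every simple term `t` and every simple poly-term `T` of
cardinality `n`, the coefficient of `⟨t⟩T` in `((P)Q)*` equals the coefficient
of `⟨t⟩T` in `(1/n!)·⟨P*⟩(Q*)ⁿ`, the latter being expanded by multilinearity
(i.e. it is `1/n!` times the sum, over all sequences `(u₁,…,uₙ)` enumerating
the multiset `T`, of `P*_t · Q*_{u₁} ⋯ Q*_{uₙ}`). -/
theorem taylor_app {S : Type*} [CommSemiring S]
    (hinv : ∀ n : ℕ, 0 < n → IsUnit ((n : S)))
    (P Q : ATerm S) (t : RTerm) (T : List RTerm) :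
    taylorCoeff (.app t T) (.app P Q) =
      Ring.inverse ((T.length.factorial : S)) *
        ((T.permutations.dedup).map fun L =>
            taylorCoeff t P * (L.map fun u => taylorCoeff u Q).prod).sum := by
  classical
  -- the sum is a constant times the number of distinct permutations
  have hconst : ∀ L ∈ T.permutations.dedup,
      taylorCoeff t P * (L.map fun u => taylorCoeff u Q).prod
        = taylorCoeff t P * (T.map fun u => taylorCoeff u Q).prod := by
    intro L hL
    have hperm : L.Perm T := List.mem_permutations.1 (List.mem_dedup.1 hL)
    rw [(hperm.map fun u => taylorCoeff u Q).prod_eq]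
  rw [List.map_congr_left hconst]
  set c := taylorCoeff t P * (T.map fun u => taylorCoeff u Q).prod with hc
  have hsum : ((T.permutations.dedup).map fun _ => c).sum
      = (T.permutations.dedup.length : S) * c := by
    rw [List.map_const', List.sum_replicate, nsmul_eq_mul]
  rw [hsum]
  -- notation
  set n := T.length with hn
  set D := T.permutations.dedup.length with hD
  set C := ∏ u ∈ T.toFinset, (T.count u).factorial with hC
  have hDC : D * C = n.factorial := by
    rw [hD, hC, hn, ← List.card_toFinset]
    exact taylor_perm_count_key T
  -- units
  have hCpos : 0 < C := Finset.prod_pos fun u _ => Nat.factorial_pos _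
  have hCunit : IsUnit ((C : S)) := hinv C hCpos
  have hFunit : IsUnit ((n.factorial : S)) := hinv _ n.factorial_pos
  have hinvC : Ring.inverse ((C : S)) = Ring.inverse ((n.factorial : S)) * D := by
    have h1 : (D : S) * C = (n.factorial : S) := by exact_mod_cast congrArg (Nat.cast : ℕ → S) hDC
    calc Ring.inverse ((C : S))
        = Ring.inverse ((n.factorial : S)) * (n.factorial : S) * Ring.inverse ((C : S)) := by
          rw [Ring.inverse_mul_cancel _ hFunit, one_mul]
      _ = Ring.inverse ((n.factorial : S)) * D * ((C : S) * Ring.inverse ((C : S))) := by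
          rw [← h1]; ring
      _ = Ring.inverse ((n.factorial : S)) * D := by
          rw [Ring.mul_inverse_cancel _ hCunit, mul_one]
  -- unfold the left-hand side
  rw [taylorCoeff, taylor_weight_app, taylor_mult_app]
  -- cast of the multiplicity product
  have hcast : ((mult t * (T.map mult).prod * C : ℕ) : S)
      = (mult t : S) * ((T.map fun u => ((mult u : ℕ) : S)).prod) * (C : S) := by
    push_cast [Nat.cast_list_prod, List.map_map]
    rfl
  rw [hcast]
  rw [Ring.mul_inverse_rev, Ring.mul_inverse_rev, hinvC,
    taylor_inverse_list_prod, List.map_map]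
  -- unfold the right-hand side constant
  rw [hc, taylorCoeff]
  have hprod : (T.map fun u => taylorCoeff u Q).prod
      = (T.map fun u => Ring.inverse ((mult u : S))).prod *
        (T.map fun u => weight u Q).prod := by
    rw [← List.prod_map_mul]
    rfl
  rw [hprod]
  have : (T.map (Ring.inverse ∘ fun u => ((mult u : ℕ) : S))).prod
      = (T.map fun u => Ring.inverse ((mult u : S))).prod := rfl
  rw [this]
  ring
end

section
/- The weight, and hence the Taylor expansion, is invariant under the algebraic equivalence: if M ≡_alg N in the algebraic λ-calculus over a semiring S, then w(t,M) = w(t,N) for every simple resource term t; consequently, if S has multiplicative inverses of positive integers, M* = N*. -/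
set_option maxHeartbeats 1000000

section
variable {S : Type*} [Semiring S]

lemma weight_smul (t : RTerm) (α : S) (M : ATerm S) : weight t (.smul α M) = α * weight t M := by
  cases t <;> simp [weight]

lemma weight_add (t : RTerm) (M N : ATerm S) : weight t (.add M N) = weight t M + weight t N := by
  cases t <;> simp [weight]

lemma weight_zero (t : RTerm) : weight t (.zero : ATerm S) = 0 := by
  cases t <;> simp [weight]

lemma weight_lam (t : RTerm) (x : ℕ) (M : ATerm S) :
    weight t (.lam x M) = match t with
      | .lam y s => if y = x then weight s M else 0
      | _ => 0 := by
  cases t <;> simp [weight]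

lemma weight_app (t : RTerm) (M N : ATerm S) :
    weight t (.app M N) = match t with
      | .app s T => weight s M * (T.attach.map fun u => weight u.1 N).prod
      | _ => 0 := by
  cases t <;> simp [weight]

lemma weight_algEq_aux {M N : ATerm S} (h : AlgEq M N) :
    ∀ t : RTerm, weight t M = weight t N := by
  induction h with
  | refl M => intro t; rfl
  | symm _ ih => intro t; exact (ih t).symm
  | trans _ _ ih1 ih2 => intro t; exact (ih1 t).trans (ih2 t)
  | lamCong x _ ih => intro t; cases t <;> simp [weight_lam, ih]
  | appCong _ _ ih1 ih2 => intro t; cases t <;> simp [weight_app, ih1, ih2]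
  | smulCong α _ ih => intro t; simp [weight_smul, ih]
  | addCong _ _ ih1 ih2 => intro t; simp [weight_add, ih1, ih2]
  | addZero M => intro t; simp [weight_add, weight_zero]
  | addAssoc M N P => intro t; simp [weight_add, add_assoc]
  | addComm M N => intro t; simp [weight_add, add_comm]
  | smulAdd α M N => intro t; simp [weight_smul, weight_add, mul_add]
  | addSmul α β M => intro t; simp [weight_smul, weight_add, add_mul]
  | smulSmul α β M => intro t; simp [weight_smul, mul_assoc]
  | oneSmul M => intro t; simp [weight_smul]
  | zeroSmul M => intro t; simp [weight_smul, weight_zero]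
  | smulZero α => intro t; simp [weight_smul, weight_zero]
  | lamAdd x M N => intro t; cases t <;> simp [weight_lam, weight_add, weight_zero] <;> split <;> simp
  | lamSmul x α M => intro t; cases t <;> simp [weight_lam, weight_smul, weight_zero] <;> split <;> simp
  | lamZero x => intro t; cases t <;> simp [weight_lam, weight_zero] <;> split <;> simp
  | zeroApp M => intro t; cases t <;> simp [weight_app, weight_zero]
  | smulApp α M N => intro t; cases t <;> simp [weight_app, weight_smul, mul_assoc]
  | addApp M N P => intro t; cases t <;> simp [weight_app, weight_add, add_mul]

end

/-- **Invariance of the weight and of the Taylor expansion under the algebraic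
equivalence**: if `M ≡_alg N` then `w(t,M) = w(t,N)` for every simple resource
term `t`; consequently, if positive integers are invertible in `S`, the Taylor
expansions coincide: `M*_t = N*_t` for all `t`. -/
theorem weight_algEq {S : Type*} [Semiring S] {M N : ATerm S} (h : AlgEq M N) :
    (∀ t : RTerm, weight t M = weight t N) ∧
      ((∀ n : ℕ, 0 < n → IsUnit ((n : S))) →
        ∀ t : RTerm, taylorCoeff t M = taylorCoeff t N) := by
  refine ⟨weight_algEq_aux h, fun _ t => ?_⟩
  simp [taylorCoeff, weight_algEq_aux h t]
end
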